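/- Let G be a 2-group and let F : X → Y be any morphism of left G-torsors. Then F is an equivalence (its underlying functor is an equivalence of categories, and hence F is an equivalence of left G-modules). -/

import Mathlib

namespace BraidedExt

open CategoryTheory MonoidalCategory

universe v₁ v₂ v₃ u₁ u₂ u₃

variable (C : Type u₁) [Category.{v₁} C] [MonoidalCategory C]

/-- A left module category over a monoidal category `C`: a category `X` with an action
bifunctor, associativity and unit isomorphisms, satisfying naturality, pentagon and
triangle coherence (equivalently, a pseudofunctor from the delooping of `C` to `Cat`). -/
structure LeftModule (X : Type u₂) [Category.{v₂} X] where
  act : C ⥤ X ⥤ X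
  assoc : ∀ (c c' : C) (x : X), (act.obj (c ⊗ c')).obj x ≅ (act.obj c).obj ((act.obj c').obj x)
  unitor : ∀ x : X, (act.obj (𝟙_ C)).obj x ≅ x
  assoc_naturality :
    ∀ {c₁ c₂ c₁' c₂' : C} {x₁ x₂ : X} (f : c₁ ⟶ c₂) (f' : c₁' ⟶ c₂') (g : x₁ ⟶ x₂),
      (act.map (f ⊗ₘ f')).app x₁ ≫ (act.obj (c₂ ⊗ c₂')).map g ≫ (assoc c₂ c₂' x₂).hom =
        (assoc c₁ c₁' x₁).hom ≫ (act.map f).app ((act.obj c₁').obj x₁) ≫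
          (act.obj c₂).map ((act.map f').app x₁ ≫ (act.obj c₂').map g)
  unitor_naturality : ∀ {x₁ x₂ : X} (g : x₁ ⟶ x₂),
    (act.obj (𝟙_ C)).map g ≫ (unitor x₂).hom = (unitor x₁).hom ≫ g
  pentagon : ∀ (c c' c'' : C) (x : X),
    (act.map (α_ c c' c'').hom).app x ≫ (assoc c (c' ⊗ c'') x).hom ≫
        (act.obj c).map (assoc c' c'' x).hom =
      (assoc (c ⊗ c') c'' x).hom ≫ (assoc c c' ((act.obj c'').obj x)).hom
  triangle_right : ∀ (c : C) (x : X),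
    (act.map (ρ_ c).hom).app x = (assoc c (𝟙_ C) x).hom ≫ (act.obj c).map (unitor x).hom
  triangle_left : ∀ (c : C) (x : X),
    (act.map (λ_ c).hom).app x = (assoc (𝟙_ C) c x).hom ≫ (unitor ((act.obj c).obj x)).hom

variable {C}
variable {X : Type u₂} [Category.{v₂} X] {Y : Type u₃} [Category.{v₃} Y]

/-- A morphism of left `C`-module categories: a functor together with coherent natural
isomorphisms `F (c ▷ x) ≅ c ▷ F x`. -/
structure ModHom (M : LeftModule C X) (N : LeftModule C Y) where
  F : X ⥤ Y
  strength : ∀ (c : C) (x : X), F.obj ((M.act.obj c).obj x) ≅ (N.act.obj c).obj (F.obj x)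
  strength_naturality : ∀ {c₁ c₂ : C} (f : c₁ ⟶ c₂) {x₁ x₂ : X} (g : x₁ ⟶ x₂),
    F.map ((M.act.map f).app x₁ ≫ (M.act.obj c₂).map g) ≫ (strength c₂ x₂).hom =
      (strength c₁ x₁).hom ≫ (N.act.map f).app (F.obj x₁) ≫ (N.act.obj c₂).map (F.map g)
  strength_assoc : ∀ (c c' : C) (x : X),
    F.map (M.assoc c c' x).hom ≫ (strength c ((M.act.obj c').obj x)).hom ≫
        (N.act.obj c).map (strength c' x).hom =
      (strength (c ⊗ c') x).hom ≫ (N.assoc c c' (F.obj x)).hom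
  strength_unit : ∀ x : X,
    F.map (M.unitor x).hom = (strength (𝟙_ C) x).hom ≫ (N.unitor (F.obj x)).hom

/-- The data exhibiting a morphism of left `C`-modules as an equivalence of `C`-modules:
a quasi-inverse which is itself a module morphism, together with unit and counit natural
isomorphisms compatible with the module structure. -/
structure ModEquivData {M : LeftModule C X} {N : LeftModule C Y} (F : ModHom M N) where
  G : ModHom N M
  η : 𝟭 X ≅ F.F ⋙ G.F
  ε : G.F ⋙ F.F ≅ 𝟭 Y
  η_mod : ∀ (c : C) (x : X),
    (M.act.obj c).map (η.hom.app x) =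
      η.hom.app ((M.act.obj c).obj x) ≫ G.F.map ((F.strength c x).hom) ≫
        (G.strength c (F.F.obj x)).hom
  ε_mod : ∀ (c : C) (y : Y),
    F.F.map ((G.strength c y).hom) ≫ (F.strength c (G.F.obj y)).hom ≫
        (N.act.obj c).map (ε.hom.app y) =
      ε.hom.app ((N.act.obj c).obj y)

/-- A morphism of left `C`-modules is an equivalence of modules if it admits a
quasi-inverse module morphism with invertible module 2-cells. -/
def IsModEquiv {M : LeftModule C X} {N : LeftModule C Y} (F : ModHom M N) : Prop :=
  Nonempty (ModEquivData F)


/-- A 2-group: a monoidal category whose underlying category is a groupoid and all of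
whose objects are tensor-invertible. -/
class IsTwoGroup (G : Type u₁) [Category.{v₁} G] [MonoidalCategory G] : Prop where
  isIso : ∀ {g h : G} (f : g ⟶ h), IsIso f
  inv_obj : ∀ g : G, ∃ g' : G, Nonempty (g ⊗ g' ≅ 𝟙_ G) ∧ Nonempty (g' ⊗ g ≅ 𝟙_ G)

variable (C)

/-- The characteristic functor `(c, x) ↦ (c ▷ x, x)` of a module category. -/
def chi {X : Type u₂} [Category.{v₂} X] (M : LeftModule C X) : C × X ⥤ X × X where
  obj p := ((M.act.obj p.1).obj p.2, p.2)
  map {p q} f := ((M.act.map f.1).app p.2 ≫ (M.act.obj q.1).map f.2, f.2)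
  map_id p := by
    dsimp
    rw [CategoryTheory.Functor.map_id, CategoryTheory.Functor.map_id]
    dsimp
    simp
  map_comp {p q r} f g := by
    dsimp
    congr 1
    simp only [CategoryTheory.Functor.map_comp, NatTrans.comp_app, Category.assoc]
    rw [NatTrans.naturality_assoc]

/-- A left module `X` over a 2-group `G` is a torsor if `X` is nonempty and the
characteristic functor `G × X → X × X` is an equivalence of categories. -/
def IsTorsor {X : Type u₂} [Category.{v₂} X] (M : LeftModule C X) : Prop :=
  Nonempty X ∧ (chi C M).IsEquivalence


section Aux

variable {C}
variable {X : Type u₂} [Category.{v₂} X] {Y : Type u₃} [Category.{v₃} Y]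

/-- Acting on a fixed object gives a functor `C ⥤ X`. -/
def actAt (M : LeftModule C X) (x₀ : X) : C ⥤ X where
  obj g := (M.act.obj g).obj x₀
  map f := (M.act.map f).app x₀
  map_id g := by
    show (M.act.map (𝟙 g)).app x₀ = _
    rw [M.act.map_id]; rfl
  map_comp f g := by
    show (M.act.map (f ≫ g)).app x₀ = _
    rw [M.act.map_comp]; rfl

theorem actAt_isEquivalence {M : LeftModule C X} (hM : IsTorsor C M) (x₀ : X) :
    (actAt M x₀).IsEquivalence := by
  haveI : (chi C M).IsEquivalence := hM.2
  haveI : (actAt M x₀).Faithful := by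
    constructor
    intro g h f f' hf
    have hf' : (M.act.map f).app x₀ = (M.act.map f').app x₀ := hf
    have h2 : (chi C M).map ((f, 𝟙 x₀) : (g, x₀) ⟶ (h, x₀)) =
        (chi C M).map ((f', 𝟙 x₀) : (g, x₀) ⟶ (h, x₀)) := by
      dsimp [chi]
      rw [hf']
    exact congrArg Prod.fst ((chi C M).map_injective h2)
  haveI : (actAt M x₀).Full := by
    constructor
    intro g h k
    have hK := (chi C M).map_preimage
      ((k, 𝟙 x₀) : (chi C M).obj (g, x₀) ⟶ (chi C M).obj (h, x₀))
    set q := (chi C M).preimage ((k, 𝟙 x₀) : (chi C M).obj (g, x₀) ⟶ (chi C M).obj (h, x₀))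
      with hq
    have h2 : q.2 = 𝟙 x₀ := congrArg Prod.snd hK
    have h1 : (M.act.map q.1).app x₀ ≫ (M.act.obj h).map q.2 = k := congrArg Prod.fst hK
    rw [h2] at h1
    simp only [CategoryTheory.Functor.map_id, Category.comp_id] at h1
    exact ⟨q.1, h1⟩
  haveI : (actAt M x₀).EssSurj := by
    constructor
    intro x
    let p := (chi C M).objPreimage (x, x₀)
    let e := (chi C M).objObjPreimageIso (x, x₀)
    have e1 : (M.act.obj p.1).obj p.2 ≅ x :=
      ⟨e.hom.1, e.inv.1, congrArg Prod.fst e.hom_inv_id, congrArg Prod.fst e.inv_hom_id⟩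
    have e2 : p.2 ≅ x₀ :=
      ⟨e.hom.2, e.inv.2, congrArg Prod.snd e.hom_inv_id, congrArg Prod.snd e.inv_hom_id⟩
    exact ⟨p.1, ⟨(M.act.obj p.1).mapIso e2.symm ≪≫ e1⟩⟩
  exact {}

variable {M : LeftModule C X} {N : LeftModule C Y}

theorem strength_nat_c (F : ModHom M N) {c₁ c₂ : C} (f : c₁ ⟶ c₂) (x : X) :
    F.F.map ((M.act.map f).app x) ≫ (F.strength c₂ x).hom =
      (F.strength c₁ x).hom ≫ (N.act.map f).app (F.F.obj x) := by
  have h := F.strength_naturality f (𝟙 x)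
  simpa using h

theorem strength_nat_x (F : ModHom M N) (c : C) {x₁ x₂ : X} (g : x₁ ⟶ x₂) :
    F.F.map ((M.act.obj c).map g) ≫ (F.strength c x₂).hom =
      (F.strength c x₁).hom ≫ (N.act.obj c).map (F.F.map g) := by
  have h := F.strength_naturality (𝟙 c) g
  simpa using h

theorem assoc_nat_x (N : LeftModule C Y) (c c' : C) {y₁ y₂ : Y} (g : y₁ ⟶ y₂) :
    (N.act.obj (c ⊗ c')).map g ≫ (N.assoc c c' y₂).hom =
      (N.assoc c c' y₁).hom ≫ (N.act.obj c).map ((N.act.obj c').map g) := by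
  have h := N.assoc_naturality (𝟙 c) (𝟙 c') g
  simpa using h

/-- The comparison isomorphism `actAt` intertwines a module morphism. -/
def strengthIso (F : ModHom M N) (x₀ : X) :
    actAt M x₀ ⋙ F.F ≅ actAt N (F.F.obj x₀) :=
  NatIso.ofComponents (fun g => F.strength g x₀) (by
    intro g h f
    exact strength_nat_c F f x₀)

/-- The unit of `F.F.asEquivalence`. -/
noncomputable def eqvUnit (F : ModHom M N) [F.F.IsEquivalence] : 𝟭 X ≅ F.F ⋙ F.F.inv :=
  F.F.asEquivalence.unitIso

/-- The counit of `F.F.asEquivalence`. -/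
noncomputable def eqvCounit (F : ModHom M N) [F.F.IsEquivalence] : F.F.inv ⋙ F.F ≅ 𝟭 Y :=
  F.F.asEquivalence.counitIso

/-- The equivalence underlying `F`, with `F.F` as its functor. -/
noncomputable abbrev eqv (F : ModHom M N) [F.F.IsEquivalence] : X ≌ Y where
  functor := F.F
  inverse := F.F.inv
  unitIso := eqvUnit F
  counitIso := eqvCounit F
  functor_unitIso_comp := F.F.asEquivalence.functor_unitIso_comp

section Inverse

variable (F : ModHom M N) [F.F.IsEquivalence]

/-- The strength of the quasi-inverse of a module morphism. -/
noncomputable def invStrength (c : C) (y : Y) :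
    (eqv F).inverse.obj ((N.act.obj c).obj y) ≅
      (M.act.obj c).obj ((eqv F).inverse.obj y) :=
  (eqv F).inverse.mapIso
      ((N.act.obj c).mapIso ((eqv F).counitIso.app y).symm ≪≫
        (F.strength c ((eqv F).inverse.obj y)).symm) ≪≫
    ((eqv F).unitIso.app ((M.act.obj c).obj ((eqv F).inverse.obj y))).symm

theorem counitInv_naturality' {w w' : Y} (v : w ⟶ w') :
    (eqv F).counitInv.app w ≫ F.F.map ((eqv F).inverse.map v) =
      v ≫ (eqv F).counitInv.app w' :=
  ((eqv F).counitInv.naturality v).symm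

theorem counitInv_invStrength (c : C) (y : Y) :
    (eqv F).counitInv.app ((N.act.obj c).obj y) ≫ F.F.map (invStrength F c y).hom =
      (N.act.obj c).map ((eqv F).counitInv.app y) ≫
        (F.strength c ((eqv F).inverse.obj y)).inv := by
  dsimp [invStrength]
  rw [Functor.map_comp]
  rw [reassoc_of% (counitInv_naturality' F
    ((N.act.obj c).map ((eqv F).counitIso.inv.app y) ≫
      (F.strength c ((eqv F).inverse.obj y)).inv))]
  have h3 : (eqv F).counitInv.app
        (F.F.obj ((M.act.obj c).obj ((eqv F).inverse.obj y))) ≫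
      F.F.map ((eqv F).unitIso.inv.app
        ((M.act.obj c).obj ((eqv F).inverse.obj y))) = 𝟙 _ :=
    (eqv F).counitInv_functor_comp _
  rw [h3]
  simp [Equivalence.counitInv]

theorem m_inj {w : Y} {z : X} (t u : (eqv F).inverse.obj w ⟶ z)
    (h : (eqv F).counitInv.app w ≫ F.F.map t =
      (eqv F).counitInv.app w ≫ F.F.map u) : t = u := by
  apply F.F.map_injective
  exact (cancel_epi ((eqv F).counitInv.app w)).mp h

end Inverse

theorem counitInv_naturality₂ (F : ModHom M N) [F.F.IsEquivalence] {w w' : Y} (v : w ⟶ w') :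
    v ≫ (eqv F).counitInv.app w' =
      (eqv F).counitInv.app w ≫ F.F.map ((eqv F).inverse.map v) :=
  (eqv F).counitInv.naturality v

theorem map_unit_app (F : ModHom M N) [F.F.IsEquivalence] (z : X) :
    F.F.map ((eqv F).unitIso.hom.app z) =
      (eqv F).counitInv.app (F.F.obj z) :=
  ((eqv F).counitInv_app_functor z).symm

theorem strength_nat_c_inv (F : ModHom M N) {c₁ c₂ : C} (f : c₁ ⟶ c₂) (x : X) :
    (F.strength c₁ x).inv ≫ F.F.map ((M.act.map f).app x) =
      (N.act.map f).app (F.F.obj x) ≫ (F.strength c₂ x).inv := by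
  rw [Iso.inv_comp_eq, ← Category.assoc, Iso.eq_comp_inv]
  exact strength_nat_c F f x

theorem strength_nat_x_inv (F : ModHom M N) (c : C) {x₁ x₂ : X} (g : x₁ ⟶ x₂) :
    (F.strength c x₁).inv ≫ F.F.map ((M.act.obj c).map g) =
      (N.act.obj c).map (F.F.map g) ≫ (F.strength c x₂).inv := by
  rw [Iso.inv_comp_eq, ← Category.assoc, Iso.eq_comp_inv]
  exact strength_nat_x F c g

theorem strength_assoc_inv (F : ModHom M N) (c c' : C) (x : X) :
    (F.strength (c ⊗ c') x).inv ≫ F.F.map (M.assoc c c' x).hom =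
      (N.assoc c c' (F.F.obj x)).hom ≫ (N.act.obj c).map (F.strength c' x).inv ≫
        (F.strength c ((M.act.obj c').obj x)).inv := by
  have h := F.strength_assoc c c' x
  rw [← Iso.inv_comp_eq] at h
  rw [Iso.inv_comp_eq, ← h]
  simp

theorem strength_unit_inv (F : ModHom M N) (x : X) :
    (F.strength (𝟙_ C) x).inv ≫ F.F.map (M.unitor x).hom =
      (N.unitor (F.F.obj x)).hom := by
  rw [Iso.inv_comp_eq, F.strength_unit]

section Inverse2

variable (F : ModHom M N) [F.F.IsEquivalence]

theorem invStrength_naturality {c₁ c₂ : C} (f : c₁ ⟶ c₂) {y₁ y₂ : Y} (g : y₁ ⟶ y₂) :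
    (eqv F).inverse.map ((N.act.map f).app y₁ ≫ (N.act.obj c₂).map g) ≫
        (invStrength F c₂ y₂).hom =
      (invStrength F c₁ y₁).hom ≫ (M.act.map f).app ((eqv F).inverse.obj y₁) ≫
        (M.act.obj c₂).map ((eqv F).inverse.map g) := by
  apply m_inj F
  simp only [Functor.map_comp, Category.assoc]
  have hnat : (N.act.obj c₁).map ((eqv F).counitInv.app y₁) ≫
      (N.act.map f).app (F.F.obj ((eqv F).inverse.obj y₁)) =
      (N.act.map f).app y₁ ≫ (N.act.obj c₂).map ((eqv F).counitInv.app y₁) :=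
    NatTrans.naturality _ _
  rw [reassoc_of% (counitInv_naturality' F ((N.act.map f).app y₁)),
    reassoc_of% (counitInv_naturality' F ((N.act.obj c₂).map g)),
    counitInv_invStrength F c₂ y₂,
    reassoc_of% (counitInv_invStrength F c₁ y₁),
    reassoc_of% (strength_nat_c_inv F f ((eqv F).inverse.obj y₁)),
    strength_nat_x_inv F c₂ ((eqv F).inverse.map g),
    ← Functor.map_comp_assoc (N.act.obj c₂) g ((eqv F).counitInv.app y₂),
    counitInv_naturality₂ F g, Functor.map_comp_assoc,
    ← reassoc_of% hnat]

theorem invStrength_assoc (c c' : C) (y : Y) :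
    (eqv F).inverse.map (N.assoc c c' y).hom ≫
        (invStrength F c ((N.act.obj c').obj y)).hom ≫
        (M.act.obj c).map (invStrength F c' y).hom =
      (invStrength F (c ⊗ c') y).hom ≫
        (M.assoc c c' ((eqv F).inverse.obj y)).hom := by
  apply m_inj F
  simp only [Functor.map_comp, Category.assoc]
  have ha : (N.act.obj (c ⊗ c')).map ((eqv F).counitInv.app y) ≫
      (N.assoc c c' (F.F.obj ((eqv F).inverse.obj y))).hom =
      (N.assoc c c' y).hom ≫
        (N.act.obj c).map ((N.act.obj c').map ((eqv F).counitInv.app y)) :=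
    assoc_nat_x N c c' _
  rw [reassoc_of% (counitInv_naturality' F (N.assoc c c' y).hom),
    reassoc_of% (counitInv_invStrength F c ((N.act.obj c').obj y)),
    strength_nat_x_inv F c (invStrength F c' y).hom,
    ← Functor.map_comp_assoc (N.act.obj c),
    counitInv_invStrength F c' y, Functor.map_comp_assoc,
    reassoc_of% (counitInv_invStrength F (c ⊗ c') y),
    strength_assoc_inv F c c' ((eqv F).inverse.obj y),
    ← reassoc_of% ha]

theorem invStrength_unit (y : Y) :
    (eqv F).inverse.map (N.unitor y).hom =
      (invStrength F (𝟙_ C) y).hom ≫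
        (M.unitor ((eqv F).inverse.obj y)).hom := by
  apply m_inj F
  simp only [Functor.map_comp, Category.assoc]
  have hu : (N.act.obj (𝟙_ C)).map ((eqv F).counitInv.app y) ≫
      (N.unitor (F.F.obj ((eqv F).inverse.obj y))).hom =
      (N.unitor y).hom ≫ (eqv F).counitInv.app y :=
    N.unitor_naturality _
  rw [counitInv_naturality' F (N.unitor y).hom,
    reassoc_of% (counitInv_invStrength F (𝟙_ C) y),
    strength_unit_inv F ((eqv F).inverse.obj y), hu]

theorem invStrength_eta (c : C) (x : X) :
    (M.act.obj c).map ((eqv F).unitIso.hom.app x) =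
      (eqv F).unitIso.hom.app ((M.act.obj c).obj x) ≫
        (eqv F).inverse.map (F.strength c x).hom ≫
        (invStrength F c (F.F.obj x)).hom := by
  apply F.F.map_injective
  simp only [Functor.map_comp]
  have h : F.F.map ((M.act.obj c).map ((eqv F).unitIso.hom.app x)) ≫
      (F.strength c ((eqv F).inverse.obj (F.F.obj x))).hom =
      (F.strength c x).hom ≫
        (N.act.obj c).map (F.F.map ((eqv F).unitIso.hom.app x)) :=
    strength_nat_x F c _
  rw [map_unit_app F ((M.act.obj c).obj x),
    reassoc_of% (counitInv_naturality' F (F.strength c x).hom),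
    counitInv_invStrength F c (F.F.obj x),
    ← map_unit_app F x]
  rw [← Category.assoc, ← h]
  simp

theorem invStrength_eps (c : C) (y : Y) :
    F.F.map (invStrength F c y).hom ≫
        (F.strength c ((eqv F).inverse.obj y)).hom ≫
        (N.act.obj c).map ((eqv F).counitIso.hom.app y) =
      (eqv F).counitIso.hom.app ((N.act.obj c).obj y) := by
  rw [← cancel_epi ((eqv F).counitInv.app ((N.act.obj c).obj y)),
    reassoc_of% (counitInv_invStrength F c y)]
  simp [Equivalence.counitInv, ← Functor.map_comp]

end Inverse2

theorem isModEquiv_of_isEquivalence (F : ModHom M N) (hF : F.F.IsEquivalence) :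
    IsModEquiv F := by
  haveI := hF
  exact ⟨⟨⟨(eqv F).inverse, fun c y => invStrength F c y,
    fun {c₁ c₂} f {y₁ y₂} g => invStrength_naturality F f g,
    fun c c' y => invStrength_assoc F c c' y,
    fun y => invStrength_unit F y⟩,
    (eqv F).unitIso, (eqv F).counitIso,
    fun c x => invStrength_eta F c x,
    fun c y => invStrength_eps F c y⟩⟩

end Aux

/-- Any morphism of left `G`-torsors over a 2-group `G` is an
equivalence: its underlying functor is an equivalence of categories, and it is an
equivalence of `G`-modules. -/
theorem modHom_of_torsors_isEquiv {G : Type u₁} [Category.{v₁} G] [MonoidalCategory G]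
    [IsTwoGroup G] {X : Type u₂} [Category.{v₂} X] {Y : Type u₃} [Category.{v₃} Y]
    {M : LeftModule G X} {N : LeftModule G Y} (hM : IsTorsor G M) (hN : IsTorsor G N)
    (F : ModHom M N) :
    F.F.IsEquivalence ∧ IsModEquiv F := by
  obtain ⟨hx, hchiM⟩ := id hM
  obtain ⟨x₀⟩ := hx
  haveI h1 : (actAt M x₀).IsEquivalence := actAt_isEquivalence hM x₀
  haveI h2 : (actAt N (F.F.obj x₀)).IsEquivalence := actAt_isEquivalence hN (F.F.obj x₀)
  haveI h3 : (actAt M x₀ ⋙ F.F).IsEquivalence :=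
    Functor.isEquivalence_of_iso (strengthIso F x₀).symm
  haveI h4 : F.F.IsEquivalence := Functor.isEquivalence_of_comp_left (actAt M x₀) F.F
  exact ⟨h4, isModEquiv_of_isEquivalence F h4⟩

end BraidedExt
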